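/- Fix integers e, f ≥ 1 and m, l ≥ 1, and vectors s = (s_1,…,s_e) ∈ ℝ^e and s' = (s'_1,…,s'_f) ∈ ℝ^f. For n ≥ 1 let ν_n be the probability measure on ℝ given by the uniform average, over all pairs (b, b') with b ∈ ℕ^e, ∑_{i=1}^e b_i = mn, and b' ∈ ℕ^f, ∑_{j=1}^f b'_j = ln, of the Dirac masses δ at the points (1/n)(∑_{i=1}^e b_i s_i + ∑_{j=1}^f b'_j s'_j). Let η be the probability measure on ℝ^e × ℝ^f proportional to the restriction to Δ × Δ' of the (e+f−2)-dimensional Hausdorff measure, and let φ : ℝ^e × ℝ^f → ℝ be the linear form (x, x') ↦ m∑_{i=1}^e s_i x_i + l∑_{j=1}^f s'_j x'_j. Then ν_n converges to the pushforward measure φ_*η in the topology of weak convergence of probability measures on ℝ as n → ∞. -/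

import Mathlib

open MeasureTheory Filter Topology
open scoped ENNReal

namespace TensorSlope

/-- lattice points of the dilated corner simplex -/
def grid (d N : ℕ) : Finset (Fin d → ℕ) :=
  (Fintype.piFinset fun _ => Finset.range (N+1)).filter (fun c => ∑ i, c i ≤ N)

lemma mem_grid {d N : ℕ} {c : Fin d → ℕ} : c ∈ grid d N ↔ ∑ i, c i ≤ N := by
  constructor
  · intro h; exact (Finset.mem_filter.mp h).2
  · intro h
    refine Finset.mem_filter.mpr ⟨Fintype.mem_piFinset.mpr fun i => ?_, h⟩
    exact Finset.mem_range.mpr (Nat.lt_succ_of_le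
      ((Finset.single_le_sum (fun j _ => Nat.zero_le _) (Finset.mem_univ i)).trans h))

/-- the corner simplex -/
def corner (d : ℕ) : Set (Fin d → ℝ) := {y | (∀ i, 0 ≤ y i) ∧ ∑ i, y i ≤ 1}

lemma isClosed_corner (d : ℕ) : IsClosed (corner d) := by
  have h1 : IsClosed {y : Fin d → ℝ | ∀ i, 0 ≤ y i} := by
    have : {y : Fin d → ℝ | ∀ i, 0 ≤ y i} = ⋂ i, {y | 0 ≤ y i} := by
      ext y; simp [Set.mem_iInter]
    rw [this]
    exact isClosed_iInter fun i => isClosed_le continuous_const (continuous_apply i)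
  have h2 : IsClosed {y : Fin d → ℝ | ∑ i, y i ≤ 1} :=
    isClosed_le (by continuity) continuous_const
  exact h1.inter h2

lemma measurableSet_corner (d : ℕ) : MeasurableSet (corner d) :=
  (isClosed_corner d).measurableSet

lemma corner_subset_box (d : ℕ) : corner d ⊆ Set.univ.pi fun _ : Fin d => Set.Icc (0:ℝ) 1 := by
  rintro y ⟨h0, h1⟩ i _
  exact ⟨h0 i, le_trans (Finset.single_le_sum (fun j _ => h0 j) (Finset.mem_univ i)) h1⟩

lemma volume_corner_lt_top (d : ℕ) : volume (corner d) < ∞ := by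
  refine lt_of_le_of_lt (measure_mono (corner_subset_box d)) ?_
  rw [volume_pi_pi]
  simp [Real.volume_Icc]

lemma volume_corner_pos (d : ℕ) : 0 < volume (corner d) := by
  refine lt_of_lt_of_le ?_ (measure_mono (?_ : (Set.univ.pi fun _ : Fin d =>
    Set.Ioo (0:ℝ) ((d:ℝ)+1)⁻¹) ⊆ corner d))
  · rw [volume_pi_pi]
    simp only [Real.volume_Ioo]
    rw [CanonicallyOrderedAdd.prod_pos]
    intro i _
    rw [ENNReal.ofReal_pos]
    have : (0:ℝ) < ((d:ℝ)+1)⁻¹ := by positivity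
    linarith
  · intro y hy
    simp only [Set.mem_pi, Set.mem_univ, forall_true_left, Set.mem_Ioo] at hy
    constructor
    · intro i; exact le_of_lt (hy i).1
    · calc ∑ i, y i ≤ ∑ _i : Fin d, ((d:ℝ)+1)⁻¹ :=
            Finset.sum_le_sum fun i _ => le_of_lt (hy i).2
        _ = d * ((d:ℝ)+1)⁻¹ := by simp [mul_comm]
        _ ≤ 1 := by
            rw [← div_eq_mul_inv, div_le_one (by positivity)]
            linarith


section Psi

variable (d₁ d₂ : ℕ)

/-- the linear part of the snoc parametrization -/
def snocLin (d : ℕ) : (Fin d → ℝ) →ₗ[ℝ] EuclideanSpace ℝ (Fin (d+1)) where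
  toFun y := WithLp.toLp 2 (Fin.snoc y (- ∑ i, y i) : Fin (d+1) → ℝ)
  map_add' a b := by
    ext i
    refine Fin.lastCases ?_ (fun j => ?_) i
    · simp [Fin.snoc_last, Finset.sum_add_distrib]
      ring
    · simp [Fin.snoc_castSucc]
  map_smul' c a := by
    ext i
    refine Fin.lastCases ?_ (fun j => ?_) i
    · simp [Fin.snoc_last, Finset.mul_sum]
    · simp [Fin.snoc_castSucc]

lemma snocLin_injective (d : ℕ) : Function.Injective (snocLin d) := by
  intro a b hab
  funext i
  have := congrFun (congrArg WithLp.ofLp hab) (Fin.castSucc i)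
  simpa [snocLin, Fin.snoc_castSucc] using this

/-- linear part of the pair parametrization -/
def Lpair : ((Fin d₁ → ℝ) × (Fin d₂ → ℝ)) →ₗ[ℝ]
    (EuclideanSpace ℝ (Fin (d₁+1)) × EuclideanSpace ℝ (Fin (d₂+1))) :=
  (snocLin d₁).prodMap (snocLin d₂)

lemma Lpair_injective : Function.Injective (Lpair d₁ d₂) := by
  intro a b hab
  have h1 := congrArg Prod.fst hab
  have h2 := congrArg Prod.snd hab
  exact Prod.ext (snocLin_injective d₁ h1) (snocLin_injective d₂ h2)

/-- base point -/
def psi0 : EuclideanSpace ℝ (Fin (d₁+1)) × EuclideanSpace ℝ (Fin (d₂+1)) :=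
  (WithLp.toLp 2 (Fin.snoc 0 1 : Fin (d₁+1) → ℝ), WithLp.toLp 2 (Fin.snoc 0 1 : Fin (d₂+1) → ℝ))

/-- the affine parametrization of the product of hyperplanes -/
def Psi : ((Fin d₁ → ℝ) × (Fin d₂ → ℝ)) →
    (EuclideanSpace ℝ (Fin (d₁+1)) × EuclideanSpace ℝ (Fin (d₂+1))) :=
  fun p => psi0 d₁ d₂ + Lpair d₁ d₂ p

lemma Psi_fst (p : (Fin d₁ → ℝ) × (Fin d₂ → ℝ)) :
    (Psi d₁ d₂ p).1 = WithLp.toLp 2 (Fin.snoc p.1 (1 - ∑ i, p.1 i) : Fin (d₁+1) → ℝ) := by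
  ext i
  refine Fin.lastCases ?_ (fun j => ?_) i
  · simp [Psi, psi0, Lpair, snocLin, Fin.snoc_last]
    ring
  · simp [Psi, psi0, Lpair, snocLin, Fin.snoc_castSucc]

lemma Psi_snd (p : (Fin d₁ → ℝ) × (Fin d₂ → ℝ)) :
    (Psi d₁ d₂ p).2 = WithLp.toLp 2 (Fin.snoc p.2 (1 - ∑ j, p.2 j) : Fin (d₂+1) → ℝ) := by
  ext i
  refine Fin.lastCases ?_ (fun j => ?_) i
  · simp [Psi, psi0, Lpair, snocLin, Fin.snoc_last]
    ring
  · simp [Psi, psi0, Lpair, snocLin, Fin.snoc_castSucc]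

lemma Psi_injective : Function.Injective (Psi d₁ d₂) := by
  intro a b hab
  exact Lpair_injective d₁ d₂ (by
    have := hab
    unfold Psi at this
    exact add_left_cancel this)

lemma Psi_add (t p : (Fin d₁ → ℝ) × (Fin d₂ → ℝ)) :
    Psi d₁ d₂ (t + p) = Lpair d₁ d₂ t + Psi d₁ d₂ p := by
  unfold Psi
  rw [map_add]
  abel

lemma isClosedEmbedding_Psi : IsClosedEmbedding (Psi d₁ d₂) := by
  have h1 : IsClosedEmbedding (Lpair d₁ d₂) :=
    LinearMap.isClosedEmbedding_of_injective
      (LinearMap.ker_eq_bot.mpr (Lpair_injective d₁ d₂))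
  have h2 := (Homeomorph.addLeft (psi0 d₁ d₂)).isClosedEmbedding
  exact h2.comp h1

lemma measurableEmbedding_Psi : MeasurableEmbedding (Psi d₁ d₂) :=
  (isClosedEmbedding_Psi d₁ d₂).measurableEmbedding

lemma continuous_Psi : Continuous (Psi d₁ d₂) := (isClosedEmbedding_Psi d₁ d₂).continuous

lemma exists_lipschitz_Psi : ∃ C : NNReal, LipschitzWith C (Psi d₁ d₂) := by
  have : Continuous (Lpair d₁ d₂) := (Lpair d₁ d₂).continuous_of_finiteDimensional
  let L' := LinearMap.toContinuousLinearMap (Lpair d₁ d₂)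
  refine ⟨‖L'‖₊, ?_⟩
  have hL : LipschitzWith ‖L'‖₊ (Lpair d₁ d₂) := L'.lipschitz
  have ht : Isometry (fun x => psi0 d₁ d₂ + x) := isometry_add_left _
  exact (ht.lipschitz.comp hL).weaken (by simp)

lemma exists_antilipschitz_Psi : ∃ C : NNReal, AntilipschitzWith C (Psi d₁ d₂) := by
  obtain ⟨K, _, hK⟩ := (Lpair d₁ d₂).exists_antilipschitzWith
    (LinearMap.ker_eq_bot.mpr (Lpair_injective d₁ d₂))
  refine ⟨K, ?_⟩
  have ht : Isometry (fun x : EuclideanSpace ℝ (Fin (d₁+1)) × EuclideanSpace ℝ (Fin (d₂+1)) =>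
    psi0 d₁ d₂ + x) := isometry_add_left _
  have := ht.antilipschitz.comp hK
  rw [mul_one] at this
  exact this

end Psi


section Rho

variable (d₁ d₂ : ℕ)

local notation "G" => (Fin d₁ → ℝ) × (Fin d₂ → ℝ)
local notation "E" => EuclideanSpace ℝ (Fin (d₁+1)) × EuclideanSpace ℝ (Fin (d₂+1))

/-- the pullback of the Hausdorff measure under `Psi` -/
noncomputable def rho : Measure ((Fin d₁ → ℝ) × (Fin d₂ → ℝ)) :=
  Measure.comap (Psi d₁ d₂) (μH[((d₁ + d₂ : ℕ) : ℝ)])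

lemma rho_apply (s : Set ((Fin d₁ → ℝ) × (Fin d₂ → ℝ))) :
    rho d₁ d₂ s = μH[((d₁ + d₂ : ℕ) : ℝ)] (Psi d₁ d₂ '' s) :=
  (measurableEmbedding_Psi d₁ d₂).comap_apply _ _

lemma image_preimage_add (t : (Fin d₁ → ℝ) × (Fin d₂ → ℝ))
    (s : Set ((Fin d₁ → ℝ) × (Fin d₂ → ℝ))) :
    Psi d₁ d₂ '' ((fun p => t + p) ⁻¹' s) = (fun u => Lpair d₁ d₂ t + u) ⁻¹' (Psi d₁ d₂ '' s) := by
  ext u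
  constructor
  · rintro ⟨p, hp, rfl⟩
    refine Set.mem_preimage.mpr ?_
    rw [← Psi_add]
    exact ⟨t + p, hp, rfl⟩
  · intro hu
    simp only [Set.mem_preimage] at hu
    obtain ⟨p, hp, hpu⟩ := hu
    refine ⟨p - t, ?_, ?_⟩
    · simpa using hp
    · have h1 : Psi d₁ d₂ (t + (p - t)) = Lpair d₁ d₂ t + Psi d₁ d₂ (p - t) := Psi_add d₁ d₂ _ _
      rw [add_sub_cancel] at h1
      exact (add_left_cancel (hpu.symm.trans h1)).symm

instance rho_isAddLeftInvariant : (rho d₁ d₂).IsAddLeftInvariant := by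
  constructor
  intro t
  ext s hs
  rw [Measure.map_apply (measurable_const_add t) hs, rho_apply, rho_apply,
    image_preimage_add, measure_preimage_add]

lemma haar_hausdorff_G : Measure.IsAddHaarMeasure (μH[((d₁ + d₂ : ℕ) : ℝ)] :
    Measure ((Fin d₁ → ℝ) × (Fin d₂ → ℝ))) := by
  have h : (d₁ + d₂) = Module.finrank ℝ ((Fin d₁ → ℝ) × (Fin d₂ → ℝ)) := by
    rw [Module.finrank_prod, Module.finrank_fintype_fun_eq_card,
      Module.finrank_fintype_fun_eq_card]
    simp
  rw [h]
  infer_instance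

instance rho_isFiniteMeasureOnCompacts : IsFiniteMeasureOnCompacts (rho d₁ d₂) := by
  have := haar_hausdorff_G d₁ d₂
  obtain ⟨C, hC⟩ := exists_lipschitz_Psi d₁ d₂
  constructor
  intro K hK
  rw [rho_apply]
  refine lt_of_le_of_lt (hC.hausdorffMeasure_image_le (by positivity) K) ?_
  exact ENNReal.mul_lt_top
    (ENNReal.rpow_lt_top_of_nonneg (by positivity) ENNReal.coe_ne_top)
    hK.measure_lt_top

lemma volume_haar_G : Measure.IsAddHaarMeasure (volume : Measure ((Fin d₁ → ℝ) × (Fin d₂ → ℝ))) := by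
  have h : (volume : Measure ((Fin d₁ → ℝ) × (Fin d₂ → ℝ))) =
      (volume : Measure (Fin d₁ → ℝ)).prod (volume : Measure (Fin d₂ → ℝ)) :=
    Measure.volume_eq_prod _ _
  rw [h]
  exact Measure.prod.instIsAddHaarMeasure _ _

/-- the proportionality constant -/
noncomputable def haarC : NNReal :=
  haveI := volume_haar_G d₁ d₂
  Measure.addHaarScalarFactor (rho d₁ d₂) (volume : Measure ((Fin d₁ → ℝ) × (Fin d₂ → ℝ)))

lemma rho_eq_smul : rho d₁ d₂ = (haarC d₁ d₂ : ℝ≥0∞) • (volume : Measure ((Fin d₁ → ℝ) × (Fin d₂ → ℝ))) := by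
  haveI := volume_haar_G d₁ d₂
  rw [← ENNReal.smul_def]
  exact Measure.isAddLeftInvariant_eq_smul _ _

lemma haarC_ne_zero : (haarC d₁ d₂ : ℝ≥0∞) ≠ 0 := by
  haveI := haar_hausdorff_G d₁ d₂
  intro h0
  obtain ⟨K, hK⟩ := exists_antilipschitz_Psi d₁ d₂
  have h1 : (μH[((d₁ + d₂ : ℕ) : ℝ)] : Measure ((Fin d₁ → ℝ) × (Fin d₂ → ℝ))) Set.univ
      ≤ (K : ℝ≥0∞) ^ ((d₁ + d₂ : ℕ) : ℝ) * μH[((d₁ + d₂ : ℕ) : ℝ)] (Psi d₁ d₂ '' Set.univ) :=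
    hK.le_hausdorffMeasure_image (by positivity) _
  have h2 : μH[((d₁ + d₂ : ℕ) : ℝ)] (Psi d₁ d₂ '' Set.univ) = 0 := by
    rw [← rho_apply, rho_eq_smul, h0]
    simp
  rw [h2, mul_zero] at h1
  have h3 : (0:ℝ≥0∞) < (μH[((d₁ + d₂ : ℕ) : ℝ)] :
      Measure ((Fin d₁ → ℝ) × (Fin d₂ → ℝ))) Set.univ :=
    isOpen_univ.measure_pos _ ⟨0, trivial⟩
  exact absurd (le_antisymm h1 h3.le).symm h3.ne

end Rho


section Simplex

/-- the standard simplex -/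
def simplexSet (d : ℕ) : Set (EuclideanSpace ℝ (Fin (d+1))) :=
  {x | (∀ i, 0 ≤ x i) ∧ ∑ i, x i = 1}

lemma sum_snoc (d : ℕ) (y : Fin d → ℝ) (a : ℝ) :
    ∑ i, (Fin.snoc y a : Fin (d+1) → ℝ) i = ∑ i, y i + a := by
  rw [Fin.sum_univ_castSucc]
  simp

lemma snoc_mem_simplex_iff (d : ℕ) (y : Fin d → ℝ) :
    WithLp.toLp 2 (Fin.snoc y (1 - ∑ i, y i) : Fin (d+1) → ℝ) ∈ simplexSet d ↔ y ∈ corner d := by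
  constructor
  · rintro ⟨h0, _⟩
    constructor
    · intro i
      have := h0 (Fin.castSucc i)
      simpa using this
    · have := h0 (Fin.last d)
      simp only [Fin.snoc_last] at this
      linarith
  · rintro ⟨h0, h1⟩
    refine ⟨?_, ?_⟩
    · intro i
      refine Fin.lastCases ?_ (fun j => ?_) i
      · simp only [Fin.snoc_last]
        linarith
      · simpa using h0 j
    · rw [sum_snoc]
      ring

lemma eq_snoc_of_mem_simplex (d : ℕ) (x : EuclideanSpace ℝ (Fin (d+1)))
    (hx : ∑ i, x i = 1) :
    x = (Fin.snoc (Fin.init x) (1 - ∑ i, Fin.init x i) : Fin (d+1) → ℝ) := by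
  funext i
  refine Fin.lastCases ?_ (fun j => ?_) i
  · rw [Fin.snoc_last]
    rw [Fin.sum_univ_castSucc] at hx
    have : ∑ i : Fin d, Fin.init x i = ∑ i : Fin d, x (Fin.castSucc i) := by
      apply Finset.sum_congr rfl
      intro j _
      rfl
    rw [this]
    linarith
  · rw [Fin.snoc_castSucc]
    rfl

variable (d₁ d₂ : ℕ)

lemma Psi_preimage_simplex :
    Psi d₁ d₂ ⁻¹' (simplexSet d₁ ×ˢ simplexSet d₂) = corner d₁ ×ˢ corner d₂ := by
  ext p
  simp only [Set.mem_preimage, Set.mem_prod]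
  rw [Psi_fst, Psi_snd, snoc_mem_simplex_iff, snoc_mem_simplex_iff]

lemma simplex_subset_range :
    simplexSet d₁ ×ˢ simplexSet d₂ ⊆ Set.range (Psi d₁ d₂) := by
  rintro ⟨x₁, x₂⟩ ⟨⟨_, hs1⟩, ⟨_, hs2⟩⟩
  refine ⟨(Fin.init x₁, Fin.init x₂), ?_⟩
  have e1 := Psi_fst d₁ d₂ (Fin.init x₁, Fin.init x₂)
  have e2 := Psi_snd d₁ d₂ (Fin.init x₁, Fin.init x₂)
  refine Prod.ext ?_ ?_
  · rw [e1]
    exact congrArg (WithLp.toLp 2) (eq_snoc_of_mem_simplex d₁ x₁ hs1).symm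
  · rw [e2]
    exact congrArg (WithLp.toLp 2) (eq_snoc_of_mem_simplex d₂ x₂ hs2).symm

lemma image_corner : Psi d₁ d₂ '' (corner d₁ ×ˢ corner d₂) = simplexSet d₁ ×ˢ simplexSet d₂ := by
  rw [← Psi_preimage_simplex, Set.image_preimage_eq_inter_range,
    Set.inter_eq_left.mpr (simplex_subset_range d₁ d₂)]

lemma map_rho_restrict :
    Measure.map (Psi d₁ d₂) ((rho d₁ d₂).restrict (corner d₁ ×ˢ corner d₂)) =
      (μH[((d₁ + d₂ : ℕ) : ℝ)]).restrict (simplexSet d₁ ×ˢ simplexSet d₂) := by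
  ext A hA
  rw [(measurableEmbedding_Psi d₁ d₂).map_apply,
    Measure.restrict_apply ((measurableEmbedding_Psi d₁ d₂).measurable hA),
    Measure.restrict_apply hA, rho_apply, ← Psi_preimage_simplex, ← Set.preimage_inter,
    Set.image_preimage_eq_inter_range,
    Set.inter_eq_left.mpr (Set.inter_subset_right.trans (simplex_subset_range d₁ d₂))]

lemma hausdorff_simplex_eq : μH[((d₁ + d₂ : ℕ) : ℝ)] (simplexSet d₁ ×ˢ simplexSet d₂)
    = (haarC d₁ d₂ : ℝ≥0∞) * volume (corner d₁ ×ˢ corner d₂) := by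
  rw [← image_corner, ← rho_apply, rho_eq_smul]
  simp

/-- the key identification of the normalized measure -/
lemma eta_eq :
    ((μH[((d₁ + d₂ : ℕ) : ℝ)] (simplexSet d₁ ×ˢ simplexSet d₂))⁻¹ •
      (μH[((d₁ + d₂ : ℕ) : ℝ)]).restrict (simplexSet d₁ ×ˢ simplexSet d₂) : Measure _) =
    (volume (corner d₁ ×ˢ corner d₂))⁻¹ •
      Measure.map (Psi d₁ d₂) (volume.restrict (corner d₁ ×ˢ corner d₂)) := by
  rw [← map_rho_restrict, hausdorff_simplex_eq, rho_eq_smul, Measure.restrict_smul,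
    Measure.map_smul, smul_smul]
  congr 1
  rw [ENNReal.mul_inv (Or.inl (haarC_ne_zero d₁ d₂)) (Or.inl ENNReal.coe_ne_top),
    mul_comm, ← mul_assoc,
    ENNReal.mul_inv_cancel (haarC_ne_zero d₁ d₂) ENNReal.coe_ne_top, one_mul]

end Simplex


section Cells

/-- half-open grid cell -/
def cell (d N : ℕ) (c : Fin d → ℕ) : Set (Fin d → ℝ) :=
  Set.univ.pi fun i => Set.Ico ((c i : ℝ)/(N:ℝ)) (((c i : ℝ)+1)/(N:ℝ))

lemma mem_cell {d N : ℕ} {c : Fin d → ℕ} {z : Fin d → ℝ} :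
    z ∈ cell d N c ↔ ∀ i, (c i : ℝ)/(N:ℝ) ≤ z i ∧ z i < ((c i : ℝ)+1)/(N:ℝ) := by
  simp [cell, Set.mem_univ_pi, Set.mem_Ico]

lemma volume_cell (d N : ℕ) (c : Fin d → ℕ) :
    volume (cell d N c) = (ENNReal.ofReal ((N:ℝ)⁻¹))^d := by
  rw [cell, volume_pi_pi]
  have : ∀ i : Fin d, volume (Set.Ico ((c i : ℝ)/(N:ℝ)) (((c i : ℝ)+1)/(N:ℝ)))
      = ENNReal.ofReal ((N:ℝ)⁻¹) := by
    intro i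
    rw [Real.volume_Ico]
    congr 1
    rw [div_sub_div_same]
    ring_nf
  simp [this]

lemma cell_nonneg {d N : ℕ} {c : Fin d → ℕ} {z : Fin d → ℝ} (hz : z ∈ cell d N c) (i : Fin d) :
    0 ≤ z i :=
  le_trans (by positivity) (mem_cell.mp hz i).1

lemma cell_le_two {d N : ℕ} {c : Fin d → ℕ} (hc : c ∈ grid d N) {z : Fin d → ℝ}
    (hz : z ∈ cell d N c) (i : Fin d) : z i ≤ 2 := by
  have h1 := (mem_cell.mp hz i).2
  rcases Nat.eq_zero_or_pos N with hN | hN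
  · subst hN
    exact absurd (lt_of_le_of_lt (cell_nonneg hz i) h1) (by simp)
  · have hci : c i ≤ N := le_trans
      (Finset.single_le_sum (fun j _ => Nat.zero_le _) (Finset.mem_univ i)) (mem_grid.mp hc)
    have hN' : (0:ℝ) < N := by exact_mod_cast hN
    refine le_of_lt (lt_of_lt_of_le h1 ?_)
    rw [div_le_iff₀ hN']
    have : (c i : ℝ) ≤ N := by exact_mod_cast hci
    have : (1:ℝ) ≤ N := by exact_mod_cast hN
    nlinarith [this]

lemma cell_unique {d N : ℕ} {c : Fin d → ℕ} {z : Fin d → ℝ}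
    (h : z ∈ cell d N c) : c = fun i => ⌊(N:ℝ) * z i⌋₊ := by
  funext i
  obtain ⟨h1, h2⟩ := mem_cell.mp h i
  rcases Nat.eq_zero_or_pos N with hN | hN
  · exfalso
    rw [hN] at h1 h2
    simp only [Nat.cast_zero, div_zero] at h1 h2
    linarith
  have hN' : (0:ℝ) < N := by exact_mod_cast hN
  rw [div_le_iff₀ hN'] at h1
  rw [lt_div_iff₀ hN'] at h2
  symm
  rw [Nat.floor_eq_iff (mul_nonneg (Nat.cast_nonneg N) (cell_nonneg h i))]
  constructor
  · calc ((c i : ℕ) : ℝ) ≤ z i * N := h1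
      _ = (N:ℝ) * z i := mul_comm _ _
  · calc (N:ℝ) * z i = z i * N := mul_comm _ _
      _ < (c i : ℝ) + 1 := h2

lemma mem_cell_floor {d N : ℕ} (hN : 0 < N) {z : Fin d → ℝ} (hz : ∀ i, 0 ≤ z i) :
    z ∈ cell d N (fun i => ⌊(N:ℝ) * z i⌋₊) := by
  rw [mem_cell]
  intro i
  have hN' : (0:ℝ) < N := by exact_mod_cast hN
  constructor
  · rw [div_le_iff₀ hN']
    exact (Nat.floor_le (mul_nonneg (Nat.cast_nonneg N) (hz i))).trans (le_of_eq (mul_comm _ _))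
  · rw [lt_div_iff₀ hN']
    calc z i * (N:ℝ) = (N:ℝ) * z i := mul_comm _ _
      _ < (⌊(N:ℝ) * z i⌋₊ : ℝ) + 1 := Nat.lt_floor_add_one _

lemma floor_mem_grid {d N : ℕ} {z : Fin d → ℝ} (hz : ∀ i, 0 ≤ z i)
    (hsum : ∑ i, z i ≤ 1) : (fun i => ⌊(N:ℝ) * z i⌋₊) ∈ grid d N := by
  rw [mem_grid]
  have h1 : ((∑ i, ⌊(N:ℝ) * z i⌋₊ : ℕ) : ℝ) ≤ (N:ℝ) := by
    push_cast
    calc ∑ i, (⌊(N:ℝ) * z i⌋₊ : ℝ) ≤ ∑ i, (N:ℝ) * z i :=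
          Finset.sum_le_sum fun i _ => Nat.floor_le (mul_nonneg (Nat.cast_nonneg N) (hz i))
      _ = (N:ℝ) * ∑ i, z i := by rw [Finset.mul_sum]
      _ ≤ (N:ℝ) * 1 := by
          exact mul_le_mul_of_nonneg_left hsum (Nat.cast_nonneg N)
      _ = (N:ℝ) := by ring
  exact_mod_cast h1

lemma not_mem_cell_of_neg {d N : ℕ} {c : Fin d → ℕ} {z : Fin d → ℝ} {i : Fin d}
    (hz : z i < 0) : z ∉ cell d N c := fun h => absurd (cell_nonneg h i) (not_le.mpr hz)

lemma not_mem_cell_of_sum_gt {d N : ℕ} {z : Fin d → ℝ}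
    (hsum : (d:ℝ) < (N:ℝ) * (∑ i, z i - 1)) {c : Fin d → ℕ} (hc : c ∈ grid d N) :
    z ∉ cell d N c := by
  intro h
  rcases Nat.eq_zero_or_pos N with hN | hN
  · rw [hN] at hsum
    simp only [Nat.cast_zero, zero_mul] at hsum
    exact absurd hsum (not_lt.mpr (Nat.cast_nonneg d))
  have hN' : (0:ℝ) < N := by exact_mod_cast hN
  have h1 : ∀ i, (N:ℝ) * z i < (c i : ℝ) + 1 := by
    intro i
    have h2 := (mem_cell.mp h i).2
    rw [lt_div_iff₀ hN'] at h2
    calc (N:ℝ) * z i = z i * N := mul_comm _ _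
      _ < _ := h2
  have h2 : (N:ℝ) * ∑ i, z i < ∑ i, ((c i : ℝ) + 1) := by
    rw [Finset.mul_sum]
    rcases Nat.eq_zero_or_pos d with hd | hd
    · exfalso
      subst hd
      simp only [Finset.univ_eq_empty, Finset.sum_empty, Nat.cast_zero] at hsum
      nlinarith [hsum, hN']
    · exact Finset.sum_lt_sum_of_nonempty
        (Finset.univ_nonempty_iff.mpr (Fin.pos_iff_nonempty.mp hd)) fun i _ => h1 i
  have h3 : ∑ i, ((c i : ℝ) + 1) = ((∑ i, c i : ℕ) : ℝ) + d := by
    push_cast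
    rw [Finset.sum_add_distrib]
    simp
  have h4 : ((∑ i, c i : ℕ) : ℝ) ≤ (N:ℝ) := by exact_mod_cast mem_grid.mp hc
  rw [h3] at h2
  nlinarith

lemma tendsto_floor_div (m : ℕ) (hm : 1 ≤ m) (z : ℝ) (hz : 0 ≤ z) :
    Tendsto (fun n : ℕ => (⌊((m*n : ℕ):ℝ) * z⌋₊ : ℝ) / ((m*n : ℕ):ℝ)) atTop (𝓝 z) := by
  have hmn : Tendsto (fun n : ℕ => ((m*n : ℕ):ℝ)) atTop atTop := by
    refine tendsto_natCast_atTop_atTop.comp ?_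
    exact tendsto_atTop_mono (fun n => Nat.le_mul_of_pos_left n hm) tendsto_id
  have hinv : Tendsto (fun n : ℕ => (((m*n : ℕ):ℝ))⁻¹) atTop (𝓝 0) :=
    hmn.inv_tendsto_atTop
  have hlow : Tendsto (fun n : ℕ => z - (((m*n : ℕ):ℝ))⁻¹) atTop (𝓝 z) := by
    have := tendsto_const_nhds (x := z) (f := atTop (α := ℕ)) |>.sub hinv
    simpa using this
  refine tendsto_of_tendsto_of_tendsto_of_le_of_le' hlow tendsto_const_nhds ?_ ?_
  · filter_upwards [hmn.eventually_gt_atTop 0] with n hn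
    have h1 : ((m*n : ℕ):ℝ) * z < (⌊((m*n : ℕ):ℝ) * z⌋₊ : ℝ) + 1 :=
      Nat.lt_floor_add_one _
    rw [sub_le_iff_le_add, div_add' _ _ _ (ne_of_gt hn), le_div_iff₀ hn]
    calc z * ((m*n : ℕ):ℝ) = ((m*n : ℕ):ℝ) * z := by ring
      _ ≤ (⌊((m*n : ℕ):ℝ) * z⌋₊ : ℝ) + 1 := h1.le
      _ = (⌊((m*n : ℕ):ℝ) * z⌋₊ : ℝ) + ((m*n : ℕ):ℝ) * (((m*n : ℕ):ℝ))⁻¹ := by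
          rw [mul_inv_cancel₀ (ne_of_gt hn)]
      _ = _ := by ring
  · filter_upwards [hmn.eventually_gt_atTop 0] with n hn
    rw [div_le_iff₀ hn]
    exact (Nat.floor_le (mul_nonneg hn.le hz)).trans (le_of_eq (mul_comm _ _))

end Cells


section Core

variable (d₁ d₂ : ℕ) (F : (Fin d₁ → ℝ) × (Fin d₂ → ℝ) → ℝ)

lemma measurableSet_cell (d N : ℕ) (c : Fin d → ℕ) : MeasurableSet (cell d N c) :=
  MeasurableSet.univ_pi fun _ => measurableSet_Ico

/-- the step function associated to a grid discretization -/
noncomputable def stepF (N₁ N₂ : ℕ) : ((Fin d₁ → ℝ) × (Fin d₂ → ℝ)) → ℝ :=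
  fun y => ∑ p ∈ grid d₁ N₁ ×ˢ grid d₂ N₂,
    Set.indicator (cell d₁ N₁ p.1 ×ˢ cell d₂ N₂ p.2)
      (fun _ => F (fun i => (p.1 i : ℝ)/(N₁:ℝ), fun j => (p.2 j : ℝ)/(N₂:ℝ))) y

lemma volume_cell_prod (N₁ N₂ : ℕ) (c₁ : Fin d₁ → ℕ) (c₂ : Fin d₂ → ℕ) :
    volume (cell d₁ N₁ c₁ ×ˢ cell d₂ N₂ c₂) =
      (ENNReal.ofReal ((N₁:ℝ)⁻¹))^d₁ * (ENNReal.ofReal ((N₂:ℝ)⁻¹))^d₂ := by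
  rw [Measure.volume_eq_prod, Measure.prod_prod, volume_cell, volume_cell]

lemma stepF_integral (N₁ N₂ : ℕ) :
    ∫ y, stepF d₁ d₂ F N₁ N₂ y =
      (((N₁ : ℝ))⁻¹ ^ d₁ * ((N₂ : ℝ))⁻¹ ^ d₂) *
        ∑ p ∈ grid d₁ N₁ ×ˢ grid d₂ N₂,
          F (fun i => (p.1 i : ℝ)/(N₁:ℝ), fun j => (p.2 j : ℝ)/(N₂:ℝ)) := by
  have hmeas : ∀ p : (Fin d₁ → ℕ) × (Fin d₂ → ℕ),
      MeasurableSet (cell d₁ N₁ p.1 ×ˢ cell d₂ N₂ p.2) := fun p =>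
    (measurableSet_cell d₁ N₁ p.1).prod (measurableSet_cell d₂ N₂ p.2)
  have hvol : ∀ p : (Fin d₁ → ℕ) × (Fin d₂ → ℕ),
      volume (cell d₁ N₁ p.1 ×ˢ cell d₂ N₂ p.2) < ∞ := by
    intro p
    rw [volume_cell_prod]
    exact ENNReal.mul_lt_top (ENNReal.pow_lt_top ENNReal.ofReal_lt_top)
      (ENNReal.pow_lt_top ENNReal.ofReal_lt_top)
  have hint : ∀ p ∈ grid d₁ N₁ ×ˢ grid d₂ N₂,
      Integrable (Set.indicator (cell d₁ N₁ p.1 ×ˢ cell d₂ N₂ p.2)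
        (fun _ => F (fun i => (p.1 i : ℝ)/(N₁:ℝ), fun j => (p.2 j : ℝ)/(N₂:ℝ)))) volume := by
    intro p _
    rw [integrable_indicator_iff (hmeas p)]
    exact integrableOn_const (hvol p).ne
  rw [show (fun y => stepF d₁ d₂ F N₁ N₂ y) = stepF d₁ d₂ F N₁ N₂ from rfl]
  unfold stepF
  rw [integral_finset_sum _ hint]
  rw [Finset.mul_sum]
  refine Finset.sum_congr rfl fun p _ => ?_
  rw [integral_indicator_const _ (hmeas p), measureReal_def, volume_cell_prod, smul_eq_mul]
  congr 1
  rw [ENNReal.toReal_mul, ENNReal.toReal_pow, ENNReal.toReal_pow,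
    ENNReal.toReal_ofReal (by positivity), ENNReal.toReal_ofReal (by positivity)]

lemma stepF_aesm (N₁ N₂ : ℕ) : AEStronglyMeasurable (stepF d₁ d₂ F N₁ N₂) volume := by
  refine Measurable.aestronglyMeasurable ?_
  refine Finset.measurable_sum _ fun p _ => ?_
  exact measurable_const.indicator
    ((measurableSet_cell d₁ N₁ p.1).prod (measurableSet_cell d₂ N₂ p.2))

set_option maxHeartbeats 1000000 in
lemma stepF_eq_of_mem {N₁ N₂ : ℕ} {y : (Fin d₁ → ℝ) × (Fin d₂ → ℝ)}
    {p : (Fin d₁ → ℕ) × (Fin d₂ → ℕ)} (hp : p ∈ grid d₁ N₁ ×ˢ grid d₂ N₂)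
    (hyp : y ∈ cell d₁ N₁ p.1 ×ˢ cell d₂ N₂ p.2) :
    stepF d₁ d₂ F N₁ N₂ y = F (fun i => (p.1 i : ℝ)/(N₁:ℝ), fun j => (p.2 j : ℝ)/(N₂:ℝ)) := by
  unfold stepF
  refine (Finset.sum_eq_single_of_mem p hp fun q hq hqp => ?_).trans
    (Set.indicator_of_mem hyp _)
  rw [Set.indicator_of_notMem]
  intro hyq
  apply hqp
  have e1 : q.1 = p.1 := (cell_unique hyq.1).trans (cell_unique hyp.1).symm
  have e2 : q.2 = p.2 := (cell_unique hyq.2).trans (cell_unique hyp.2).symm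
  exact Prod.ext e1 e2

lemma stepF_eq_zero {N₁ N₂ : ℕ} {y : (Fin d₁ → ℝ) × (Fin d₂ → ℝ)}
    (h : ∀ q ∈ grid d₁ N₁ ×ˢ grid d₂ N₂, y ∉ cell d₁ N₁ q.1 ×ˢ cell d₂ N₂ q.2) :
    stepF d₁ d₂ F N₁ N₂ y = 0 :=
  Finset.sum_eq_zero fun q hq => Set.indicator_of_notMem (h q hq) _

/-- domination box -/
def box : Set ((Fin d₁ → ℝ) × (Fin d₂ → ℝ)) :=
  (Set.univ.pi fun _ : Fin d₁ => Set.Icc (0:ℝ) 2) ×ˢ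
    (Set.univ.pi fun _ : Fin d₂ => Set.Icc (0:ℝ) 2)

lemma measurableSet_box : MeasurableSet (box d₁ d₂) :=
  ((MeasurableSet.univ_pi fun _ => measurableSet_Icc).prod
    (MeasurableSet.univ_pi fun _ => measurableSet_Icc))

lemma volume_box_lt_top : volume (box d₁ d₂) < ∞ := by
  rw [box, Measure.volume_eq_prod, Measure.prod_prod, volume_pi_pi, volume_pi_pi]
  simp only [Real.volume_Icc, Finset.prod_const, Finset.card_univ, Fintype.card_fin]
  exact ENNReal.mul_lt_top (ENNReal.pow_lt_top ENNReal.ofReal_lt_top)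
    (ENNReal.pow_lt_top ENNReal.ofReal_lt_top)

lemma stepF_bound {C : ℝ} (hC : ∀ y, |F y| ≤ C) (hC0 : 0 ≤ C) (N₁ N₂ : ℕ)
    (y : (Fin d₁ → ℝ) × (Fin d₂ → ℝ)) :
    ‖stepF d₁ d₂ F N₁ N₂ y‖ ≤ Set.indicator (box d₁ d₂) (fun _ => C) y := by
  by_cases hy : ∃ p ∈ grid d₁ N₁ ×ˢ grid d₂ N₂, y ∈ cell d₁ N₁ p.1 ×ˢ cell d₂ N₂ p.2
  · obtain ⟨p, hp, hyp⟩ := hy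
    rw [stepF_eq_of_mem d₁ d₂ F hp hyp]
    have hybox : y ∈ box d₁ d₂ := by
      obtain ⟨hp1, hp2⟩ := Finset.mem_product.mp hp
      constructor
      · intro i _
        exact Set.mem_Icc.mpr ⟨cell_nonneg hyp.1 i, cell_le_two hp1 hyp.1 i⟩
      · intro j _
        exact Set.mem_Icc.mpr ⟨cell_nonneg hyp.2 j, cell_le_two hp2 hyp.2 j⟩
    rw [Set.indicator_of_mem hybox]
    exact hC _
  · push_neg at hy
    rw [stepF_eq_zero d₁ d₂ F hy]
    simp only [norm_zero]
    exact Set.indicator_nonneg (fun _ _ => hC0) y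

set_option maxHeartbeats 1000000 in
lemma stepF_tendsto (m l : ℕ) (hm : 1 ≤ m) (hl : 1 ≤ l) (hF : Continuous F)
    (y : (Fin d₁ → ℝ) × (Fin d₂ → ℝ)) :
    Tendsto (fun n : ℕ => stepF d₁ d₂ F (m*n) (l*n) y) atTop
      (𝓝 (Set.indicator (corner d₁ ×ˢ corner d₂) F y)) := by
  by_cases hy : y ∈ corner d₁ ×ˢ corner d₂
  · rw [Set.indicator_of_mem hy]
    obtain ⟨⟨hy1n, hy1s⟩, hy2n, hy2s⟩ := hy
    have hev : ∀ᶠ n : ℕ in atTop, stepF d₁ d₂ F (m*n) (l*n) y =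
        F (fun i => (⌊((m*n : ℕ):ℝ) * y.1 i⌋₊ : ℝ)/((m*n : ℕ):ℝ),
           fun j => (⌊((l*n : ℕ):ℝ) * y.2 j⌋₊ : ℝ)/((l*n : ℕ):ℝ)) := by
      filter_upwards [eventually_ge_atTop 1] with n hn
      have hN₁ : 0 < m*n := Nat.mul_pos hm hn
      have hN₂ : 0 < l*n := Nat.mul_pos hl hn
      exact stepF_eq_of_mem d₁ d₂ F
        (p := (fun i => ⌊((m*n : ℕ):ℝ) * y.1 i⌋₊, fun j => ⌊((l*n : ℕ):ℝ) * y.2 j⌋₊))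
        (Finset.mem_product.mpr ⟨floor_mem_grid hy1n hy1s, floor_mem_grid hy2n hy2s⟩)
        ⟨mem_cell_floor hN₁ hy1n, mem_cell_floor hN₂ hy2n⟩
    rw [tendsto_congr' hev]
    have h1 : Tendsto (fun n : ℕ => (fun i => (⌊((m*n : ℕ):ℝ) * y.1 i⌋₊ : ℝ)/((m*n : ℕ):ℝ) :
        Fin d₁ → ℝ)) atTop (𝓝 y.1) :=
      tendsto_pi_nhds.mpr fun i => tendsto_floor_div m hm (y.1 i) (hy1n i)
    have h2 : Tendsto (fun n : ℕ => (fun j => (⌊((l*n : ℕ):ℝ) * y.2 j⌋₊ : ℝ)/((l*n : ℕ):ℝ) :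
        Fin d₂ → ℝ)) atTop (𝓝 y.2) :=
      tendsto_pi_nhds.mpr fun j => tendsto_floor_div l hl (y.2 j) (hy2n j)
    have := (hF.tendsto y).comp ((h1.prodMk_nhds h2).congr (fun n => rfl))
    simpa [Function.comp_def] using this
  · rw [Set.indicator_of_notMem hy]
    have hev : ∀ᶠ n : ℕ in atTop, stepF d₁ d₂ F (m*n) (l*n) y = 0 := by
      rw [Set.mem_prod, not_and_or] at hy
      have key : ∀ (d N : ℕ) (z : Fin d → ℝ), z ∉ corner d →
          ((∃ i, z i < 0) ∨ 1 < ∑ i, z i) := by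
        intro d N z hz
        rw [corner, Set.mem_setOf_eq, not_and_or] at hz
        rcases hz with hz | hz
        · left
          push_neg at hz
          exact hz
        · right
          exact lt_of_not_ge hz
      have hmul : ∀ (k : ℕ), 1 ≤ k → Tendsto (fun n : ℕ => ((k*n : ℕ):ℝ)) atTop atTop :=
        fun k hk => tendsto_natCast_atTop_atTop.comp
          (tendsto_atTop_mono (fun n => Nat.le_mul_of_pos_left n hk) tendsto_id)
      rcases hy with hy | hy
      · rcases key d₁ 0 y.1 hy with ⟨i, hi⟩ | hsum
        · filter_upwards with n
          exact stepF_eq_zero d₁ d₂ F fun q _ h => not_mem_cell_of_neg hi h.1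
        · have hpos : (0:ℝ) < ∑ i, y.1 i - 1 := by linarith
          have := ((hmul m hm).atTop_mul_const hpos).eventually_gt_atTop (d₁:ℝ)
          filter_upwards [this] with n hn
          refine stepF_eq_zero d₁ d₂ F fun q hq h => ?_
          refine not_mem_cell_of_sum_gt ?_ (Finset.mem_product.mp hq).1 h.1
          calc ((d₁:ℕ):ℝ) < ((m*n : ℕ):ℝ) * (∑ i, y.1 i - 1) := hn
            _ = _ := rfl
      · rcases key d₂ 0 y.2 hy with ⟨j, hj⟩ | hsum
        · filter_upwards with n
          exact stepF_eq_zero d₁ d₂ F fun q _ h => not_mem_cell_of_neg hj h.2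
        · have hpos : (0:ℝ) < ∑ j, y.2 j - 1 := by linarith
          have := ((hmul l hl).atTop_mul_const hpos).eventually_gt_atTop (d₂:ℝ)
          filter_upwards [this] with n hn
          refine stepF_eq_zero d₁ d₂ F fun q hq h => ?_
          refine not_mem_cell_of_sum_gt ?_ (Finset.mem_product.mp hq).2 h.2
          calc ((d₂:ℕ):ℝ) < ((l*n : ℕ):ℝ) * (∑ j, y.2 j - 1) := hn
            _ = _ := rfl
    rw [tendsto_congr' hev]
    exact tendsto_const_nhds

/-- the key Riemann sum convergence -/
lemma core (m l : ℕ) (hm : 1 ≤ m) (hl : 1 ≤ l) (hF : Continuous F) (C : ℝ)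
    (hC : ∀ y, |F y| ≤ C) :
    Tendsto (fun n : ℕ =>
      (((m*n : ℕ) : ℝ)⁻¹ ^ d₁ * ((l*n : ℕ) : ℝ)⁻¹ ^ d₂) *
        ∑ p ∈ grid d₁ (m*n) ×ˢ grid d₂ (l*n),
          F (fun i => (p.1 i : ℝ)/((m*n : ℕ):ℝ), fun j => (p.2 j : ℝ)/((l*n : ℕ):ℝ)))
      atTop (𝓝 (∫ y in (corner d₁) ×ˢ (corner d₂), F y)) := by
  have hC0 : 0 ≤ C := le_trans (abs_nonneg _) (hC (0, 0))
  have hdom := tendsto_integral_of_dominated_convergence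
    (μ := volume) (F := fun n : ℕ => stepF d₁ d₂ F (m*n) (l*n))
    (f := Set.indicator (corner d₁ ×ˢ corner d₂) F)
    (Set.indicator (box d₁ d₂) (fun _ => C))
    (fun n => stepF_aesm d₁ d₂ F _ _)
    (by
      rw [integrable_indicator_iff (measurableSet_box d₁ d₂)]
      exact integrableOn_const (volume_box_lt_top d₁ d₂).ne)
    (fun n => ae_of_all _ (stepF_bound d₁ d₂ F hC hC0 _ _))
    (ae_of_all _ (stepF_tendsto d₁ d₂ F m l hm hl hF))
  rw [integral_indicator ((measurableSet_corner d₁).prod (measurableSet_corner d₂))] at hdom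
  exact hdom.congr fun n => stepF_integral d₁ d₂ F (m*n) (l*n)

end Core


section Reindex

lemma sum_snoc_nat {d : ℕ} (c : Fin d → ℕ) (a : ℕ) :
    ∑ i, (Fin.snoc c a : Fin (d+1) → ℕ) i = (∑ i, c i) + a := by
  rw [Fin.sum_univ_castSucc]
  simp

lemma sum_antidiagonalTuple_eq {M : Type*} [AddCommMonoid M] (d N : ℕ)
    (G : (Fin (d+1) → ℕ) → M) :
    ∑ b ∈ Finset.Nat.antidiagonalTuple (d+1) N, G b
      = ∑ c ∈ grid d N, G (Fin.snoc c (N - ∑ i, c i)) := by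
  have hleft : ∀ b ∈ Finset.Nat.antidiagonalTuple (d+1) N,
      (Fin.snoc (b ∘ Fin.castSucc) (N - ∑ i, (b ∘ Fin.castSucc) i) : Fin (d+1) → ℕ) = b := by
    intro b hb
    rw [Finset.Nat.mem_antidiagonalTuple, Fin.sum_univ_castSucc] at hb
    funext i
    refine Fin.lastCases ?_ (fun j => ?_) i
    · rw [Fin.snoc_last]
      simp only [Function.comp_apply]
      omega
    · rw [Fin.snoc_castSucc]
      simp only [Function.comp_apply]
  refine Finset.sum_nbij' (fun b => b ∘ Fin.castSucc)
    (fun c => Fin.snoc c (N - ∑ i, c i)) ?_ ?_ hleft ?_ ?_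
  · intro b hb
    rw [Finset.Nat.mem_antidiagonalTuple, Fin.sum_univ_castSucc] at hb
    rw [mem_grid]
    simp only [Function.comp_apply]
    omega
  · intro c hc
    rw [mem_grid] at hc
    rw [Finset.Nat.mem_antidiagonalTuple, sum_snoc_nat]
    omega
  · intro c _
    funext j
    simp [Fin.snoc_castSucc]
  · intro b hb
    rw [hleft b hb]

lemma sum_antidiagonalTuple_prod {M : Type*} [AddCommMonoid M] (d₁ d₂ N₁ N₂ : ℕ)
    (G : ((Fin (d₁+1) → ℕ) × (Fin (d₂+1) → ℕ)) → M) :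
    ∑ p ∈ Finset.Nat.antidiagonalTuple (d₁+1) N₁ ×ˢ Finset.Nat.antidiagonalTuple (d₂+1) N₂, G p
      = ∑ q ∈ grid d₁ N₁ ×ˢ grid d₂ N₂,
          G (Fin.snoc q.1 (N₁ - ∑ i, q.1 i), Fin.snoc q.2 (N₂ - ∑ j, q.2 j)) := by
  rw [Finset.sum_product, Finset.sum_product, sum_antidiagonalTuple_eq]
  refine Finset.sum_congr rfl fun c _ => ?_
  rw [sum_antidiagonalTuple_eq]

lemma grid_nonempty (d N : ℕ) : (grid d N).Nonempty :=
  ⟨fun _ => 0, mem_grid.mpr (by simp)⟩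

end Reindex

section PointEq

lemma point_eq (d₁ d₂ m l n : ℕ) (hm : 1 ≤ m) (hl : 1 ≤ l) (hn : 1 ≤ n)
    (s : Fin (d₁+1) → ℝ) (s' : Fin (d₂+1) → ℝ) (c : Fin d₁ → ℕ) (c' : Fin d₂ → ℕ)
    (hc : c ∈ grid d₁ (m*n)) (hc' : c' ∈ grid d₂ (l*n)) :
    (∑ i, ((Fin.snoc c (m*n - ∑ i, c i) : Fin (d₁+1) → ℕ) i : ℝ) * s i
      + ∑ j, ((Fin.snoc c' (l*n - ∑ j, c' j) : Fin (d₂+1) → ℕ) j : ℝ) * s' j) / (n:ℝ)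
    = (m:ℝ) * ∑ i, s i * (Psi d₁ d₂ ((fun i => (c i : ℝ)/((m*n : ℕ):ℝ)),
          (fun j => (c' j : ℝ)/((l*n : ℕ):ℝ)))).1 i
      + (l:ℝ) * ∑ j, s' j * (Psi d₁ d₂ ((fun i => (c i : ℝ)/((m*n : ℕ):ℝ)),
          (fun j => (c' j : ℝ)/((l*n : ℕ):ℝ)))).2 j := by
  have hm0 : (m:ℝ) ≠ 0 := by
    have : 0 < m := hm
    exact_mod_cast this.ne'
  have hl0 : (l:ℝ) ≠ 0 := by
    have : 0 < l := hl
    exact_mod_cast this.ne'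
  have hn0 : (n:ℝ) ≠ 0 := by
    have : 0 < n := hn
    exact_mod_cast this.ne'
  have hmn0 : ((m*n : ℕ):ℝ) ≠ 0 := by
    have : 0 < m*n := Nat.mul_pos hm hn
    exact_mod_cast this.ne'
  have hln0 : ((l*n : ℕ):ℝ) ≠ 0 := by
    have : 0 < l*n := Nat.mul_pos hl hn
    exact_mod_cast this.ne'
  rw [Psi_fst, Psi_snd]
  simp only [Fin.sum_univ_castSucc, Fin.snoc_castSucc, Fin.snoc_last]
  rw [Nat.cast_sub (mem_grid.mp hc), Nat.cast_sub (mem_grid.mp hc'), Nat.cast_sum, Nat.cast_sum]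
  have collect : ∀ (k : ℕ) (t : Fin k → ℝ) (u : Fin k → ℕ) (M : ℝ),
      ∑ x : Fin k, t x * ((u x : ℝ) / M) = (∑ x : Fin k, (u x : ℝ) * t x) / M := by
    intro k t u M
    rw [Finset.sum_div]
    refine Finset.sum_congr rfl fun x _ => ?_
    rw [mul_comm ((u x : ℝ)) (t x), mul_div_assoc]
  rw [collect, collect, ← Finset.sum_div, ← Finset.sum_div]
  have hM1 : ((m*n : ℕ):ℝ) = (m:ℝ) * (n:ℝ) := by push_cast; ring
  have hM2 : ((l*n : ℕ):ℝ) = (l:ℝ) * (n:ℝ) := by push_cast; ring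
  rw [hM1, hM2]
  field_simp

end PointEq

end TensorSlope


open TensorSlope

/-- The probability measures `ν_n`, given by the uniform average over all pairs
`(b, b')` with `b ∈ ℕ^e`, `∑ bᵢ = mn` and `b' ∈ ℕ^f`, `∑ b'ⱼ = ln` of the Dirac
masses at `(∑ bᵢ sᵢ + ∑ b'ⱼ s'ⱼ)/n`, converge weakly, as `n → ∞`, to the
pushforward under `φ(x, x') = m ∑ sᵢ xᵢ + l ∑ s'ⱼ x'ⱼ` of the normalized Lebesgue
measure `η` on the product of standard simplices `Δ × Δ' ⊆ ℝ^e × ℝ^f` (the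
probability measure proportional to the restriction to `Δ × Δ'` of the
`(e+f-2)`-dimensional Hausdorff measure). -/
theorem tensor_slope_measures_tendsto_pushforward (e f m l : ℕ)
    (he : 1 ≤ e) (hf : 1 ≤ f) (hm : 1 ≤ m) (hl : 1 ≤ l)
    (s : Fin e → ℝ) (s' : Fin f → ℝ)
    (Δ : Set (EuclideanSpace ℝ (Fin e)))
    (hΔ : Δ = {x | (∀ i, 0 ≤ x i) ∧ ∑ i, x i = 1})
    (Δ' : Set (EuclideanSpace ℝ (Fin f)))
    (hΔ' : Δ' = {x | (∀ j, 0 ≤ x j) ∧ ∑ j, x j = 1})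
    (η : Measure (EuclideanSpace ℝ (Fin e) × EuclideanSpace ℝ (Fin f)))
    (hη : η = (μH[(e : ℝ) + (f : ℝ) - 2] (Δ ×ˢ Δ'))⁻¹ •
      (μH[(e : ℝ) + (f : ℝ) - 2]).restrict (Δ ×ˢ Δ'))
    (ν : ℕ → Measure ℝ)
    (hν : ∀ n : ℕ, ν n =
      (((Finset.Nat.antidiagonalTuple e (m * n)) ×ˢ
          (Finset.Nat.antidiagonalTuple f (l * n))).card : ℝ≥0∞)⁻¹ •
        ∑ p ∈ (Finset.Nat.antidiagonalTuple e (m * n)) ×ˢ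
            (Finset.Nat.antidiagonalTuple f (l * n)),
          Measure.dirac
            ((∑ i, (p.1 i : ℝ) * s i + ∑ j, (p.2 j : ℝ) * s' j) / n)) :
    ∀ g : BoundedContinuousFunction ℝ ℝ,
      Tendsto (fun n : ℕ => ∫ x, g x ∂(ν n)) atTop
        (𝓝 (∫ x, g x ∂(η.map
          (fun x => (m : ℝ) * ∑ i, s i * x.1 i + (l : ℝ) * ∑ j, s' j * x.2 j)))) := by
  intro g
  obtain ⟨d₁, rfl⟩ : ∃ d, e = d + 1 := ⟨e - 1, by omega⟩
  obtain ⟨d₂, rfl⟩ : ∃ d, f = d + 1 := ⟨f - 1, by omega⟩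
  have hvol : volume (corner d₁ ×ˢ corner d₂) = volume (corner d₁) * volume (corner d₂) := by
    rw [Measure.volume_eq_prod, Measure.prod_prod]
  have hv0 : volume (corner d₁ ×ˢ corner d₂) ≠ 0 := by
    rw [hvol]
    exact mul_ne_zero (volume_corner_pos d₁).ne' (volume_corner_pos d₂).ne'
  have hvT : volume (corner d₁ ×ˢ corner d₂) ≠ ⊤ := by
    rw [hvol]
    exact ENNReal.mul_ne_top (volume_corner_lt_top d₁).ne (volume_corner_lt_top d₂).ne
  have hvtR : 0 < (volume (corner d₁ ×ˢ corner d₂)).toReal := ENNReal.toReal_pos hv0 hvT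
  set φ : EuclideanSpace ℝ (Fin (d₁+1)) × EuclideanSpace ℝ (Fin (d₂+1)) → ℝ :=
    fun x => (m : ℝ) * ∑ i, s i * x.1 i + (l : ℝ) * ∑ j, s' j * x.2 j with hφdef
  have hφc : Continuous φ := by
    apply Continuous.add
    · exact continuous_const.mul (continuous_finset_sum _ fun i _ =>
        continuous_const.mul ((continuous_apply i).comp ((PiLp.continuous_ofLp _ _).comp continuous_fst)))
    · exact continuous_const.mul (continuous_finset_sum _ fun j _ =>
        continuous_const.mul ((continuous_apply j).comp ((PiLp.continuous_ofLp _ _).comp continuous_snd)))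
  set F : (Fin d₁ → ℝ) × (Fin d₂ → ℝ) → ℝ := fun y => g (φ (Psi d₁ d₂ y)) with hFdef
  have hFc : Continuous F := g.continuous.comp (hφc.comp (continuous_Psi d₁ d₂))
  have hexp : ((d₁+1 : ℕ) : ℝ) + ((d₂+1 : ℕ) : ℝ) - 2 = ((d₁ + d₂ : ℕ) : ℝ) := by
    push_cast; ring
  rw [hΔ, hΔ', hexp] at hη
  have hese1 : ({x : EuclideanSpace ℝ (Fin (d₁+1)) | (∀ i, 0 ≤ x i) ∧ ∑ i, x i = 1})
      = simplexSet d₁ := rfl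
  have hese2 : ({x : EuclideanSpace ℝ (Fin (d₂+1)) | (∀ j, 0 ≤ x j) ∧ ∑ j, x j = 1})
      = simplexSet d₂ := rfl
  rw [hese1, hese2, eta_eq d₁ d₂] at hη
  have hΨm : Measurable (Psi d₁ d₂) := (continuous_Psi d₁ d₂).measurable
  have htarget : ∫ x, g x ∂(η.map φ)
      = (volume (corner d₁ ×ˢ corner d₂)).toReal⁻¹ * ∫ y in corner d₁ ×ˢ corner d₂, F y := by
    rw [hη, Measure.map_smul, Measure.map_map hφc.measurable hΨm, integral_smul_measure,
      integral_map (hφc.comp (continuous_Psi d₁ d₂)).measurable.aemeasurable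
        g.continuous.aestronglyMeasurable,
      ENNReal.toReal_inv, smul_eq_mul]
    rfl
  have hnum : Tendsto (fun n : ℕ =>
      (((m*n : ℕ) : ℝ)⁻¹ ^ d₁ * ((l*n : ℕ) : ℝ)⁻¹ ^ d₂) *
        ∑ p ∈ grid d₁ (m*n) ×ˢ grid d₂ (l*n),
          F (fun i => (p.1 i : ℝ)/((m*n : ℕ):ℝ), fun j => (p.2 j : ℝ)/((l*n : ℕ):ℝ)))
      atTop (𝓝 (∫ y in corner d₁ ×ˢ corner d₂, F y)) :=
    core d₁ d₂ F m l hm hl hFc ‖g‖ (fun y => by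
      have := g.norm_coe_le_norm (φ (Psi d₁ d₂ y))
      simpa [hFdef, Real.norm_eq_abs] using this)
  have hden : Tendsto (fun n : ℕ =>
      (((m*n : ℕ) : ℝ)⁻¹ ^ d₁ * ((l*n : ℕ) : ℝ)⁻¹ ^ d₂) *
        ∑ _p ∈ grid d₁ (m*n) ×ˢ grid d₂ (l*n), (1:ℝ))
      atTop (𝓝 ((volume (corner d₁ ×ˢ corner d₂)).toReal)) := by
    have h := core d₁ d₂ (fun _ => (1:ℝ)) m l hm hl continuous_const 1 (fun y => by norm_num)
    rwa [MeasureTheory.setIntegral_const, smul_eq_mul, mul_one] at h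
  have hq := hnum.div hden hvtR.ne'
  rw [htarget]
  have hlim : (∫ y in corner d₁ ×ˢ corner d₂, F y) / (volume (corner d₁ ×ˢ corner d₂)).toReal
      = (volume (corner d₁ ×ˢ corner d₂)).toReal⁻¹ * ∫ y in corner d₁ ×ˢ corner d₂, F y :=
    div_eq_inv_mul _ _
  rw [← hlim]
  refine Tendsto.congr' ?_ hq
  filter_upwards [eventually_ge_atTop 1] with n hn
  have hmn : 0 < m*n := Nat.mul_pos hm hn
  have hln : 0 < l*n := Nat.mul_pos hl hn
  simp only [Pi.div_apply]
  rw [hν n, integral_smul_measure,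
    integral_finset_sum_measure (fun p _ => g.integrable (μ := Measure.dirac _)),
    ENNReal.toReal_inv, ENNReal.toReal_natCast]
  simp only [integral_dirac]
  rw [sum_antidiagonalTuple_prod d₁ d₂ (m*n) (l*n)
    (fun p => g ((∑ i, (p.1 i : ℝ) * s i + ∑ j, (p.2 j : ℝ) * s' j) / (n:ℝ)))]
  have hpt : ∀ q ∈ grid d₁ (m*n) ×ˢ grid d₂ (l*n),
      g ((∑ i, ((Fin.snoc q.1 (m*n - ∑ i, q.1 i) : Fin (d₁+1) → ℕ) i : ℝ) * s i
        + ∑ j, ((Fin.snoc q.2 (l*n - ∑ j, q.2 j) : Fin (d₂+1) → ℕ) j : ℝ) * s' j) / (n:ℝ))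
      = F (fun i => (q.1 i : ℝ)/((m*n : ℕ):ℝ), fun j => (q.2 j : ℝ)/((l*n : ℕ):ℝ)) := by
    intro q hq
    obtain ⟨h1, h2⟩ := Finset.mem_product.mp hq
    rw [point_eq d₁ d₂ m l n hm hl hn s s' q.1 q.2 h1 h2]
  rw [Finset.sum_congr rfl hpt]
  have hcard : (((Finset.Nat.antidiagonalTuple (d₁+1) (m*n)) ×ˢ
      (Finset.Nat.antidiagonalTuple (d₂+1) (l*n))).card : ℝ)
      = ∑ _q ∈ grid d₁ (m*n) ×ˢ grid d₂ (l*n), (1:ℝ) := by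
    rw [← sum_antidiagonalTuple_prod d₁ d₂ (m*n) (l*n) (fun _ => (1:ℝ)),
      Finset.sum_const, nsmul_eq_mul, mul_one]
  rw [hcard]
  have hWpos : (0:ℝ) < ((m*n : ℕ):ℝ)⁻¹ ^ d₁ * ((l*n : ℕ):ℝ)⁻¹ ^ d₂ := by
    have h1 : (0:ℝ) < ((m*n : ℕ):ℝ) := by exact_mod_cast hmn
    have h2 : (0:ℝ) < ((l*n : ℕ):ℝ) := by exact_mod_cast hln
    positivity
  rw [mul_div_mul_left _ _ hWpos.ne', div_eq_inv_mul, smul_eq_mul]
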